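/- Let Q ⊂ ℝ³ be the convex hull of the eight points (±√3/3, ±√3/3, ±√3/3), and for a unit vector u ∈ S² let w(u) = sup_{x∈Q} ⟨u,x⟩ − inf_{x∈Q} ⟨u,x⟩ denote the width of Q in direction u. Let σ be the surface measure on the unit sphere S² ⊂ ℝ³ (with total mass σ(S²) = 4π). Then (3/4)·(1/(4π))·∫_{S²} w(u)² dσ(u) = 1 + 4/π. In other words, the mean square width of a cube with unit edge length is 1 + 4/π. -/

import Mathlib

open Real MeasureTheory Set

/-- The point `(a, b, c)` of Euclidean 3-space. -/
noncomputable def pt (a b c : ℝ) : EuclideanSpace ℝ (Fin 3) :=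
  (WithLp.equiv 2 (Fin 3 → ℝ)).symm ![a, b, c]

/-- The width of a set `C ⊆ ℝ³` in direction `u`:
`w(u) = sup_{x ∈ C} ⟪u, x⟫ − inf_{x ∈ C} ⟪u, x⟫`. -/
noncomputable def width (C : Set (EuclideanSpace ℝ (Fin 3))) (u : EuclideanSpace ℝ (Fin 3)) : ℝ :=
  sSup ((fun x => (inner ℝ u x : ℝ)) '' C) - sInf ((fun x => (inner ℝ u x : ℝ)) '' C)

/-- The cube with vertices `(±√3/3, ±√3/3, ±√3/3)`, of edge length `2/√3`. -/
noncomputable def Q : Set (EuclideanSpace ℝ (Fin 3)) :=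
  convexHull ℝ
    {pt (Real.sqrt 3 / 3) (Real.sqrt 3 / 3) (Real.sqrt 3 / 3),
      pt (Real.sqrt 3 / 3) (Real.sqrt 3 / 3) (-(Real.sqrt 3 / 3)),
      pt (Real.sqrt 3 / 3) (-(Real.sqrt 3 / 3)) (Real.sqrt 3 / 3),
      pt (Real.sqrt 3 / 3) (-(Real.sqrt 3 / 3)) (-(Real.sqrt 3 / 3)),
      pt (-(Real.sqrt 3 / 3)) (Real.sqrt 3 / 3) (Real.sqrt 3 / 3),
      pt (-(Real.sqrt 3 / 3)) (Real.sqrt 3 / 3) (-(Real.sqrt 3 / 3)),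
      pt (-(Real.sqrt 3 / 3)) (-(Real.sqrt 3 / 3)) (Real.sqrt 3 / 3),
      pt (-(Real.sqrt 3 / 3)) (-(Real.sqrt 3 / 3)) (-(Real.sqrt 3 / 3))}

/-- The surface measure `σ` on the unit sphere `S² ⊂ ℝ³`, with total mass
`σ(S²) = 3 · vol(unit ball) = 4π`. -/
noncomputable def sphereSurfaceMeasure :
    Measure (Metric.sphere (0 : EuclideanSpace ℝ (Fin 3)) 1) :=
  (volume : Measure (EuclideanSpace ℝ (Fin 3))).toSphere

lemma inner_pt (u : EuclideanSpace ℝ (Fin 3)) (a b c : ℝ) :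
    (inner ℝ u (pt a b c) : ℝ) = u 0 * a + u 1 * b + u 2 * c := by
  simp [pt, PiLp.inner_apply, Fin.sum_univ_three, RCLike.inner_apply, WithLp.equiv_symm_apply, PiLp.toLp_apply]
  ring
lemma sq3pos : (0:ℝ) < Real.sqrt 3 / 3 := by positivity

lemma vertex_mem (e : Fin 3 → ℝ) (h : ∀ i, e i = Real.sqrt 3 / 3 ∨ e i = -(Real.sqrt 3 / 3)) :
    pt (e 0) (e 1) (e 2) ∈
      ({pt (Real.sqrt 3 / 3) (Real.sqrt 3 / 3) (Real.sqrt 3 / 3),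
      pt (Real.sqrt 3 / 3) (Real.sqrt 3 / 3) (-(Real.sqrt 3 / 3)),
      pt (Real.sqrt 3 / 3) (-(Real.sqrt 3 / 3)) (Real.sqrt 3 / 3),
      pt (Real.sqrt 3 / 3) (-(Real.sqrt 3 / 3)) (-(Real.sqrt 3 / 3)),
      pt (-(Real.sqrt 3 / 3)) (Real.sqrt 3 / 3) (Real.sqrt 3 / 3),
      pt (-(Real.sqrt 3 / 3)) (Real.sqrt 3 / 3) (-(Real.sqrt 3 / 3)),
      pt (-(Real.sqrt 3 / 3)) (-(Real.sqrt 3 / 3)) (Real.sqrt 3 / 3),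
      pt (-(Real.sqrt 3 / 3)) (-(Real.sqrt 3 / 3)) (-(Real.sqrt 3 / 3))} :
        Set (EuclideanSpace ℝ (Fin 3))) := by
  rcases h 0 with h0 | h0 <;> rcases h 1 with h1 | h1 <;> rcases h 2 with h2 | h2 <;>
    simp [Set.mem_insert_iff, h0, h1, h2]

lemma sSup_Q (u : EuclideanSpace ℝ (Fin 3)) :
    sSup ((fun x => (inner ℝ u x : ℝ)) '' Q)
      = Real.sqrt 3 / 3 * (|u 0| + |u 1| + |u 2|) := by
  set s : ℝ := Real.sqrt 3 / 3 with hs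
  have hspos : 0 < s := sq3pos
  set M : ℝ := s * (|u 0| + |u 1| + |u 2|) with hM
  have hub : ∀ y ∈ (fun x => (inner ℝ u x : ℝ)) '' Q, y ≤ M := by
    rintro y ⟨x, hx, rfl⟩
    have hsub : Q ⊆ {x | (inner ℝ u x : ℝ) ≤ M} := by
      apply convexHull_min ?_ (convex_halfSpace_le ⟨fun a b => inner_add_right u a b,
        fun c a => real_inner_smul_right u a c⟩ M)
      intro v hv
      simp only [Set.mem_insert_iff, Set.mem_singleton_iff] at hv
      have h0 := abs_nonneg (u 0); have h1 := abs_nonneg (u 1); have h2 := abs_nonneg (u 2)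
      have a0 := le_abs_self (u 0); have a1 := le_abs_self (u 1); have a2 := le_abs_self (u 2)
      have b0 := neg_abs_le (u 0); have b1 := neg_abs_le (u 1); have b2 := neg_abs_le (u 2)
      rcases hv with rfl|rfl|rfl|rfl|rfl|rfl|rfl|rfl <;>
        · show (inner ℝ u _ : ℝ) ≤ M
          rw [inner_pt, hM] ; nlinarith [hspos]
    exact hsub hx
  refine le_antisymm (Real.sSup_le hub ?_) ?_
  · -- M nonneg? need sSup_le with nonempty... use csSup_le
    positivity
  · -- M is attained
    set e : Fin 3 → ℝ := fun i => if 0 ≤ u i then s else -s with he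
    have hmem : pt (e 0) (e 1) (e 2) ∈ Q := by
      apply subset_convexHull
      exact vertex_mem e (fun i => by by_cases h : 0 ≤ u i <;> simp [he, h, hs])
    have hval : (inner ℝ u (pt (e 0) (e 1) (e 2)) : ℝ) = M := by
      rw [inner_pt, hM]
      have : ∀ i, u i * e i = s * |u i| := by
        intro i
        by_cases h : 0 ≤ u i
        · simp [he, h, abs_of_nonneg h, mul_comm]
        · push_neg at h
          simp [he, not_le.2 h, abs_of_neg h]; ring
      rw [this 0, this 1, this 2]; ring
    calc M = (inner ℝ u (pt (e 0) (e 1) (e 2)) : ℝ) := hval.symm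
    _ ≤ sSup _ := le_csSup ⟨M, hub⟩ ⟨_, hmem, rfl⟩
lemma sInf_Q (u : EuclideanSpace ℝ (Fin 3)) :
    sInf ((fun x => (inner ℝ u x : ℝ)) '' Q)
      = -(Real.sqrt 3 / 3 * (|u 0| + |u 1| + |u 2|)) := by
  have himg : -((fun x => (inner ℝ u x : ℝ)) '' Q) = (fun x => (inner ℝ (-u) x : ℝ)) '' Q := by
    ext y
    simp only [Set.mem_neg, Set.mem_image]
    constructor
    · rintro ⟨x, hx, hxy⟩
      exact ⟨x, hx, by rw [inner_neg_left]; linarith [hxy]⟩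
    · rintro ⟨x, hx, hxy⟩
      exact ⟨x, hx, by rw [inner_neg_left] at hxy; linarith [hxy]⟩
  rw [Real.sInf_def, himg, sSup_Q]
  have : ∀ i : Fin 3, (-u) i = -(u i) := fun i => rfl
  rw [this 0, this 1, this 2]
  simp [abs_neg]

lemma width_Q (u : EuclideanSpace ℝ (Fin 3)) :
    width Q u = 2 * (Real.sqrt 3 / 3) * (|u 0| + |u 1| + |u 2|) := by
  rw [width, sSup_Q, sInf_Q]; ring

lemma width_Q_sq (u : EuclideanSpace ℝ (Fin 3)) :
    (width Q u) ^ 2 = (4/3) * (|u 0| + |u 1| + |u 2|) ^ 2 := by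
  rw [width_Q]
  have : (Real.sqrt 3) ^ 2 = 3 := Real.sq_sqrt (by norm_num)
  nlinarith [this]


lemma Gamma_three_halves : Real.Gamma (3/2) = Real.sqrt π / 2 := by
  have h : (3/2 : ℝ) = 1/2 + 1 := by norm_num
  rw [h, Real.Gamma_add_one (by norm_num), Real.Gamma_one_half_eq]; ring

lemma Gamma_five_halves : Real.Gamma (5/2) = 3/4 * Real.sqrt π := by
  have h : (5/2 : ℝ) = 3/2 + 1 := by norm_num
  rw [h, Real.Gamma_add_one (by norm_num), Gamma_three_halves]; ring

lemma int_Ioi_pow_gauss (n : ℕ) :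
    ∫ x in Ioi (0:ℝ), x ^ n * exp (-x^2) = 1/2 * Real.Gamma ((n+1)/2) := by
  rw [show ∫ x in Ioi (0:ℝ), x ^ n * exp (-x^2)
      = ∫ x in Ioi (0:ℝ), x ^ (n:ℝ) * exp (-x ^ (2:ℝ)) from
    setIntegral_congr_fun measurableSet_Ioi (fun x hx => by
      rw [Real.rpow_natCast, show ((2:ℝ)) = ((2:ℕ):ℝ) by norm_num, Real.rpow_natCast])]
  rw [integral_rpow_mul_exp_neg_rpow (by norm_num)
    (lt_of_lt_of_le (by norm_num) (Nat.cast_nonneg n))]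

lemma int_gauss : ∫ x : ℝ, exp (-x^2) = Real.sqrt π := by
  simpa using integral_gaussian 1

lemma int_sq_gauss : ∫ x : ℝ, x^2 * exp (-x^2) = Real.sqrt π / 2 := by
  have h : (fun x : ℝ => x^2 * exp (-x^2)) = fun x => |x|^2 * exp (-|x|^2) := by
    ext x; rw [sq_abs]
  rw [h, integral_comp_abs (f := fun t => t^2 * exp (-t^2)), int_Ioi_pow_gauss]
  rw [show ((2:ℕ)+1:ℝ)/2 = 3/2 by norm_num, Gamma_three_halves]; ring

lemma int_abs_gauss : ∫ x : ℝ, |x| * exp (-x^2) = 1 := by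
  have h : (fun x : ℝ => |x| * exp (-x^2)) = fun x => |x| * exp (-|x|^2) := by
    ext x; rw [sq_abs]
  rw [h, integral_comp_abs (f := fun t => t * exp (-t^2)),
    show (fun t : ℝ => t * exp (-t^2)) = fun t => t^1 * exp (-t^2) by ext t; ring,
    int_Ioi_pow_gauss]
  rw [show ((1:ℕ)+1:ℝ)/2 = 1 by norm_num, Real.Gamma_one]; ring

lemma int_r4_gauss : ∫ r in Ioi (0:ℝ), r^2 * (r^2 * exp (-r^2)) = 3/8 * Real.sqrt π := by
  rw [show (fun r : ℝ => r^2 * (r^2 * exp (-r^2))) = fun r => r^4 * exp (-r^2) by ext r; ring,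
    int_Ioi_pow_gauss, show ((4:ℕ)+1:ℝ)/2 = 5/2 by norm_num, Gamma_five_halves]
  ring
lemma integrable3 {f g h : ℝ → ℝ} (hf : Integrable f) (hg : Integrable g) (hh : Integrable h) :
    Integrable (fun y : Fin 3 → ℝ => f (y 0) * g (y 1) * h (y 2)) := by
  have := Integrable.fintype_prod (ι := Fin 3) (f := ![f, g, h]) (μ := fun _ => volume) (by
    intro i; fin_cases i <;> simpa)
  simpa [Fin.prod_univ_three, mul_assoc, ← volume_pi] using this

lemma integral3 (f g h : ℝ → ℝ) :
    ∫ y : Fin 3 → ℝ, f (y 0) * g (y 1) * h (y 2) = (∫ x, f x) * (∫ x, g x) * (∫ x, h x) := by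
  have := integral_fintype_prod_eq_prod (ι := Fin 3) (f := fun i => ![f, g, h] i) (μ := fun _ => volume)
  simpa [Fin.prod_univ_three, mul_assoc, ← volume_pi] using this

lemma integrable_g0 : Integrable (fun x : ℝ => exp (-x^2)) := by
  simpa using integrable_exp_neg_mul_sq (b := 1) one_pos

lemma integrable_g2 : Integrable (fun x : ℝ => x^2 * exp (-x^2)) := by
  have := integrable_rpow_mul_exp_neg_mul_sq (b := 1) one_pos (s := 2) (by norm_num)
  simpa [Real.rpow_natCast] using this

lemma integrable_g1 : Integrable (fun x : ℝ => |x| * exp (-x^2)) := by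
  have := (integrable_mul_exp_neg_mul_sq (b := 1) one_pos).abs
  have h : (fun x : ℝ => |x * exp (-1 * x^2)|) = fun x : ℝ => |x| * exp (-x^2) := by
    ext x; rw [abs_mul, abs_of_pos (exp_pos _)]; norm_num
  rwa [h] at this
lemma int_pi3 :
    ∫ y : Fin 3 → ℝ, (|y 0| + |y 1| + |y 2|)^2 * exp (-((y 0)^2 + (y 1)^2 + (y 2)^2))
      = 3/2 * π * Real.sqrt π + 6 * Real.sqrt π := by
  set g0 : ℝ → ℝ := fun x => exp (-x^2) with hg0
  set g1 : ℝ → ℝ := fun x => |x| * exp (-x^2) with hg1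
  set g2 : ℝ → ℝ := fun x => x^2 * exp (-x^2) with hg2
  have key : (fun y : Fin 3 → ℝ =>
      (|y 0| + |y 1| + |y 2|)^2 * exp (-((y 0)^2 + (y 1)^2 + (y 2)^2)))
      = fun y =>
        (g2 (y 0) * g0 (y 1) * g0 (y 2) + g0 (y 0) * g2 (y 1) * g0 (y 2)
          + g0 (y 0) * g0 (y 1) * g2 (y 2))
        + (2 * (g1 (y 0) * g1 (y 1) * g0 (y 2)) + 2 * (g1 (y 0) * g0 (y 1) * g1 (y 2))
          + 2 * (g0 (y 0) * g1 (y 1) * g1 (y 2))) := by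
    ext y
    have e : exp (-((y 0)^2 + (y 1)^2 + (y 2)^2))
        = exp (-(y 0)^2) * exp (-(y 1)^2) * exp (-(y 2)^2) := by
      rw [← Real.exp_add, ← Real.exp_add]; ring_nf
    simp only [hg0, hg1, hg2, e]
    linear_combination (exp (-(y 0)^2) * exp (-(y 1)^2) * exp (-(y 2)^2)) * sq_abs (y 0)
      + (exp (-(y 0)^2) * exp (-(y 1)^2) * exp (-(y 2)^2)) * sq_abs (y 1)
      + (exp (-(y 0)^2) * exp (-(y 1)^2) * exp (-(y 2)^2)) * sq_abs (y 2)
  rw [key]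
  have i0 : Integrable g0 := integrable_g0
  have i1 : Integrable g1 := integrable_g1
  have i2 : Integrable g2 := integrable_g2
  have hA : Integrable (fun y : Fin 3 → ℝ =>
      g2 (y 0) * g0 (y 1) * g0 (y 2) + g0 (y 0) * g2 (y 1) * g0 (y 2)
        + g0 (y 0) * g0 (y 1) * g2 (y 2)) :=
    ((integrable3 i2 i0 i0).add (integrable3 i0 i2 i0)).add (integrable3 i0 i0 i2)
  have hB : Integrable (fun y : Fin 3 → ℝ =>
      2 * (g1 (y 0) * g1 (y 1) * g0 (y 2)) + 2 * (g1 (y 0) * g0 (y 1) * g1 (y 2))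
        + 2 * (g0 (y 0) * g1 (y 1) * g1 (y 2))) :=
    (((integrable3 i1 i1 i0).const_mul 2).add ((integrable3 i1 i0 i1).const_mul 2)).add
      ((integrable3 i0 i1 i1).const_mul 2)
  have hA1 : Integrable (fun y : Fin 3 → ℝ =>
      g2 (y 0) * g0 (y 1) * g0 (y 2) + g0 (y 0) * g2 (y 1) * g0 (y 2)) :=
    (integrable3 i2 i0 i0).add (integrable3 i0 i2 i0)
  have hB1 : Integrable (fun y : Fin 3 → ℝ =>
      2 * (g1 (y 0) * g1 (y 1) * g0 (y 2)) + 2 * (g1 (y 0) * g0 (y 1) * g1 (y 2))) :=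
    ((integrable3 i1 i1 i0).const_mul 2).add ((integrable3 i1 i0 i1).const_mul 2)
  rw [integral_add hA hB, integral_add hA1 (integrable3 i0 i0 i2),
    integral_add (integrable3 i2 i0 i0) (integrable3 i0 i2 i0),
    integral_add hB1 ((integrable3 i0 i1 i1).const_mul 2),
    integral_add ((integrable3 i1 i1 i0).const_mul 2) ((integrable3 i1 i0 i1).const_mul 2),
    integral_const_mul, integral_const_mul, integral_const_mul,
    integral3, integral3, integral3, integral3, integral3, integral3]
  have v0 : ∫ x, g0 x = Real.sqrt π := int_gauss
  have v1 : ∫ x, g1 x = 1 := int_abs_gauss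
  have v2 : ∫ x, g2 x = Real.sqrt π / 2 := int_sq_gauss
  rw [v0, v1, v2]
  have : Real.sqrt π * Real.sqrt π = π := Real.mul_self_sqrt pi_pos.le
  linear_combination (3/2 * Real.sqrt π) * this
noncomputable def W (x : EuclideanSpace ℝ (Fin 3)) : ℝ := (|x 0| + |x 1| + |x 2|)^2

lemma int_E :
    ∫ x : EuclideanSpace ℝ (Fin 3), W x * exp (-‖x‖^2)
      = 3/2 * π * Real.sqrt π + 6 * Real.sqrt π := by
  rw [← int_pi3]
  rw [← (EuclideanSpace.volume_preserving_symm_measurableEquiv_toLp (Fin 3)).integral_comp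
    (MeasurableEquiv.measurableEmbedding _)
    (fun y : Fin 3 → ℝ => (|y 0| + |y 1| + |y 2|)^2 * exp (-((y 0)^2 + (y 1)^2 + (y 2)^2)))]
  congr 1
  ext x
  have hnorm : ‖x‖^2 = (x 0)^2 + (x 1)^2 + (x 2)^2 := by
    rw [EuclideanSpace.norm_eq, Real.sq_sqrt (by positivity), Fin.sum_univ_three]
    simp [sq_abs]
  have hco : ∀ i, (MeasurableEquiv.toLp 2 (Fin 3 → ℝ)).symm x i = x i := fun i => rfl
  rw [W, hco 0, hco 1, hco 2, hnorm]
lemma W_homog (x : EuclideanSpace ℝ (Fin 3)) (hx : x ≠ 0) :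
    W (‖x‖⁻¹ • x) * (‖x‖^2 * exp (-‖x‖^2)) = W x * exp (-‖x‖^2) := by
  have hn : ‖x‖ ≠ 0 := norm_ne_zero_iff.2 hx
  have hco : ∀ i, (‖x‖⁻¹ • x) i = ‖x‖⁻¹ * x i := fun i => rfl
  have habs : ∀ i : Fin 3, |(‖x‖⁻¹ • x) i| = ‖x‖⁻¹ * |x i| := by
    intro i; rw [hco i, abs_mul, abs_of_nonneg (by positivity)]
  rw [W, W, habs 0, habs 1, habs 2]
  field_simp

lemma sphere_decomp :
    ∫ x : EuclideanSpace ℝ (Fin 3), W x * exp (-‖x‖^2)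
      = (∫ u : Metric.sphere (0 : EuclideanSpace ℝ (Fin 3)) 1, W ↑u
          ∂(volume : Measure (EuclideanSpace ℝ (Fin 3))).toSphere) * (3/8 * Real.sqrt π) := by
  set E := EuclideanSpace ℝ (Fin 3)
  set μ := (volume : Measure E) with hμ
  have hdim : Module.finrank ℝ E - 1 = 2 := by
    rw [finrank_euclideanSpace_fin]
  set F : Metric.sphere (0 : E) 1 × Ioi (0:ℝ) → ℝ :=
    fun p => W ↑p.1 * ((p.2 : ℝ)^2 * exp (-(p.2 : ℝ)^2)) with hF
  calc ∫ x : E, W x * exp (-‖x‖^2)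
      = ∫ x : ({0}ᶜ : Set E), W x.1 * exp (-‖x.1‖^2) ∂(μ.comap (↑)) := by
        rw [integral_subtype_comap (measurableSet_singleton 0).compl
          (fun x => W x * exp (-‖x‖^2)), MeasureTheory.restrict_compl_singleton (0 : E)]
    _ = ∫ x : ({0}ᶜ : Set E), F (homeomorphUnitSphereProd E x) ∂(μ.comap (↑)) := by
        congr 1
        ext x
        rw [hF]
        simp only [homeomorphUnitSphereProd_apply_fst_coe, homeomorphUnitSphereProd_apply_snd_coe]
        exact (W_homog x.1 x.2).symm
    _ = ∫ p, F p ∂(μ.toSphere.prod (Measure.volumeIoiPow (Module.finrank ℝ E - 1))) :=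
        μ.measurePreserving_homeomorphUnitSphereProd.integral_comp
          (Homeomorph.measurableEmbedding _) F
    _ = ∫ p, F p ∂(μ.toSphere.prod (Measure.volumeIoiPow 2)) := by rw [hdim]
    _ = (∫ u : Metric.sphere (0 : E) 1, W ↑u ∂μ.toSphere)
          * ∫ r : Ioi (0:ℝ), (r : ℝ)^2 * exp (-(r : ℝ)^2) ∂(Measure.volumeIoiPow 2) :=
        integral_prod_mul (fun u : Metric.sphere (0 : E) 1 => W ↑u)
          (fun r : Ioi (0:ℝ) => (r : ℝ)^2 * exp (-(r : ℝ)^2))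
    _ = (∫ u : Metric.sphere (0 : E) 1, W ↑u ∂μ.toSphere) * (3/8 * Real.sqrt π) := by
        congr 1
        simp only [Measure.volumeIoiPow, ENNReal.ofReal]
        rw [integral_withDensity_eq_integral_smul
          ((measurable_subtype_coe.pow_const 2).real_toNNReal),
          integral_subtype_comap measurableSet_Ioi
            (fun a : ℝ => (a^2).toNNReal • (a^2 * exp (-a^2)))]
        rw [← int_r4_gauss]
        refine setIntegral_congr_fun measurableSet_Ioi (fun a _ => ?_)
        rw [NNReal.smul_def, Real.coe_toNNReal _ (sq_nonneg a), smul_eq_mul]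
lemma sphere_int_W :
    ∫ u : Metric.sphere (0 : EuclideanSpace ℝ (Fin 3)) 1, W ↑u
      ∂(volume : Measure (EuclideanSpace ℝ (Fin 3))).toSphere = 4 * π + 16 := by
  have h := sphere_decomp
  rw [int_E] at h
  have hc : (3/8 * Real.sqrt π) ≠ 0 := by positivity
  apply mul_right_cancel₀ hc
  rw [← h]
  ring

lemma width_Q_sq' (x : EuclideanSpace ℝ (Fin 3)) :
    (width Q x) ^ 2 = 4/3 * W x := by
  rw [width_Q_sq]; rfl
/-- The mean square width of a cube with unit edge length is `1 + 4/π`. -/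
theorem mean_square_width_cube :
    (3/4) * (1 / (4 * π)) *
      ∫ u : Metric.sphere (0 : EuclideanSpace ℝ (Fin 3)) 1,
        (width Q ↑u) ^ 2 ∂sphereSurfaceMeasure
      = 1 + 4 / π := by
  have hint : ∫ u : Metric.sphere (0 : EuclideanSpace ℝ (Fin 3)) 1,
      (width Q ↑u) ^ 2 ∂sphereSurfaceMeasure = 4/3 * (4 * π + 16) := by
    rw [show sphereSurfaceMeasure
      = (volume : Measure (EuclideanSpace ℝ (Fin 3))).toSphere from rfl]
    simp only [width_Q_sq']
    rw [integral_const_mul, sphere_int_W]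
  rw [hint]
  have hπ : π ≠ 0 := pi_ne_zero
  field_simp
  ring
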